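/- Let x_{t+1} = A x_t + Σ_{i=1}^m u_t[i] B_i x_t + w_t with i.i.d. zero-mean inputs u_t of covariance σ_u² I_m and i.i.d. zero-mean noise w_t with covariance Σ_w, all independent as in the standard setup. Define Ã := A⊗A + σ_u² Σ_{k=1}^m B_k ⊗ B_k ∈ ℝ^{n²×n²}. If ρ(Ã) ≤ 1, then there exist a constant c < ∞ and an integer r with 0 ≤ r ≤ n², such that E[‖x_t‖₂²] ≤ c(1 + t^r) for all t ≥ 0. -/

import Mathlib

namespace Stmt11

open Polynomial Matrix

noncomputable def dop (lam : ℂ) (a : ℕ → ℂ) : ℕ → ℂ := fun t => a (t + 1) - lam * a t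

noncomputable def opList : List ℂ → (ℕ → ℂ) → (ℕ → ℂ)
  | [], a => a
  | lam :: l, a => opList l (dop lam a)

lemma growth : ∀ (l : List ℂ) (lam : ℂ), ‖lam‖ ≤ 1 → (∀ μ ∈ l, ‖μ‖ ≤ 1) →
    ∀ a : ℕ → ℂ, opList (lam :: l) a = 0 →
    ∃ C : ℝ, 0 ≤ C ∧ ∀ t : ℕ, ‖a t‖ ≤ C * (1 + t : ℝ) ^ l.length := by
  intro l
  induction l with
  | nil =>
    intro lam hlam _ a h
    refine ⟨‖a 0‖, norm_nonneg _, ?_⟩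
    intro t
    simp only [List.length_nil, pow_zero, mul_one]
    induction t with
    | zero => exact le_rfl
    | succ t ih =>
      have h0 : dop lam a = 0 := h
      have h1 : a (t + 1) = lam * a t := by
        have := congrFun h0 t
        simp only [dop, Pi.zero_apply, sub_eq_zero] at this
        exact this
      calc ‖a (t+1)‖ = ‖lam‖ * ‖a t‖ := by rw [h1, norm_mul]
        _ ≤ 1 * ‖a t‖ := by gcongr
        _ ≤ ‖a 0‖ := by simpa using ih
  | cons mu l ih =>
    intro lam hlam hl a h
    obtain ⟨C, hC0, hC⟩ := ih mu (hl mu (by simp)) (fun ν hν => hl ν (by simp [hν]))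
      (dop lam a) h
    refine ⟨‖a 0‖ + C, by positivity, ?_⟩
    have key : ∀ t : ℕ, ‖a t‖ ≤ ‖a 0‖ + ∑ s ∈ Finset.range t, ‖dop lam a s‖ := by
      intro t
      induction t with
      | zero => simp
      | succ t iht =>
        have h1 : a (t + 1) = lam * a t + dop lam a t := by simp only [dop]; ring
        calc ‖a (t+1)‖ ≤ ‖lam * a t‖ + ‖dop lam a t‖ := by rw [h1]; exact norm_add_le _ _
          _ ≤ ‖a t‖ + ‖dop lam a t‖ := by
              rw [norm_mul]
              exact add_le_add_left (by nlinarith [norm_nonneg (a t)]) _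
          _ ≤ (‖a 0‖ + ∑ s ∈ Finset.range t, ‖dop lam a s‖) + ‖dop lam a t‖ :=
              add_le_add_left iht _
          _ = ‖a 0‖ + ∑ s ∈ Finset.range (t+1), ‖dop lam a s‖ := by
              rw [Finset.sum_range_succ]; ring
    intro t
    have ht0 : (0 : ℝ) ≤ (t : ℝ) := Nat.cast_nonneg t
    have ht1 : (1 : ℝ) ≤ 1 + t := by linarith
    calc ‖a t‖ ≤ ‖a 0‖ + ∑ s ∈ Finset.range t, ‖dop lam a s‖ := key t
      _ ≤ ‖a 0‖ + ∑ s ∈ Finset.range t, C * (1 + s : ℝ) ^ l.length := by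
          refine add_le_add_right (Finset.sum_le_sum fun s _ => hC s) _
      _ ≤ ‖a 0‖ + ∑ s ∈ Finset.range t, C * (1 + t : ℝ) ^ l.length := by
          refine add_le_add_right (Finset.sum_le_sum fun s hs => ?_) _
          have hst : (s : ℝ) ≤ t := by exact_mod_cast (Finset.mem_range.mp hs).le
          have hs0 : (0:ℝ) ≤ 1 + (s:ℝ) := by positivity
          exact mul_le_mul_of_nonneg_left (pow_le_pow_left₀ hs0 (by linarith) _) hC0
      _ = ‖a 0‖ + t * (C * (1 + t : ℝ) ^ l.length) := by
          rw [Finset.sum_const, Finset.card_range]; simp [mul_comm]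
      _ ≤ (‖a 0‖ + C) * (1 + t : ℝ) ^ (mu :: l).length := by
          simp only [List.length_cons]
          have hp : (1:ℝ) ≤ (1+t)^(l.length+1) := one_le_pow₀ ht1
          have hpa : (0:ℝ) ≤ (1+t:ℝ)^l.length := by positivity
          have hq : (t:ℝ) * (1+t)^l.length ≤ (1+t)^(l.length+1) := by
            rw [pow_succ]
            calc (t:ℝ) * (1+t)^l.length = (1+t:ℝ)^l.length * t := mul_comm _ _
              _ ≤ (1+t:ℝ)^l.length * (1+t) := by gcongr <;> linarith
          nlinarith [norm_nonneg (a 0)]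



lemma opList_vecMul {ι : Type*} [Fintype ι] [DecidableEq ι] (M : Matrix ι ι ℂ) (j : ι) :
    ∀ (l : List ℂ) (v : ι → ℂ),
    opList l (fun t => Matrix.vecMul v (M ^ t) j)
      = fun t => Matrix.vecMul (Matrix.vecMul v ((l.map (fun lam => M - lam • 1)).prod)) (M ^ t) j := by
  intro l
  induction l with
  | nil => intro v; simp [opList]
  | cons lam l ih =>
    intro v
    show opList l (dop lam fun t => Matrix.vecMul v (M ^ t) j) = _
    have h1 : Matrix.vecMul v (lam • (1 : Matrix ι ι ℂ)) = lam • v := by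
      ext q
      simp [Matrix.vecMul, dotProduct, Matrix.one_apply, Finset.sum_ite_eq,
        mul_comm, mul_ite]
    have hd : (dop lam fun t => Matrix.vecMul v (M ^ t) j)
        = fun t => Matrix.vecMul (Matrix.vecMul v (M - lam • 1)) (M ^ t) j := by
      funext t
      simp only [dop, pow_succ']
      rw [← Matrix.vecMul_vecMul, Matrix.vecMul_sub, h1, Matrix.sub_vecMul,
        Matrix.smul_vecMul]
      simp
    rw [hd, ih]
    congr 1
    funext t
    rw [List.map_cons, List.prod_cons, ← Matrix.vecMul_vecMul]



lemma charpoly_root_mem_spectrum {ι : Type*} [Fintype ι] [DecidableEq ι] [Nonempty ι]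
    (Mc : Matrix ι ι ℂ) (mu : ℂ) (hmu : mu ∈ Mc.charpoly.roots) :
    mu ∈ spectrum ℂ Mc := by
  have hne : Mc.charpoly ≠ 0 := Mc.charpoly_monic.ne_zero
  have hroot : Mc.charpoly.IsRoot mu := Polynomial.isRoot_of_mem_roots hmu
  have heval : Mc.charpoly.eval mu = (Matrix.scalar ι mu - Mc).det := by
    rw [Matrix.charpoly, eval_det, Matrix.matPolyEquiv_charmatrix]
    simp
  rw [spectrum.mem_iff]
  intro hunit
  rw [Matrix.isUnit_iff_isUnit_det] at hunit
  have : (Matrix.scalar ι mu - Mc).det ≠ 0 := IsUnit.ne_zero hunit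
  apply this
  rw [← heval]
  have halg : (algebraMap ℂ (Matrix ι ι ℂ)) mu = Matrix.scalar ι mu := rfl
  exact hroot

lemma entry_bound {ι : Type*} [Fintype ι] [DecidableEq ι] [Nonempty ι]
    (M : Matrix ι ι ℝ)
    (hρ : ∀ μ : ℂ, μ ∈ spectrum ℂ (M.map (algebraMap ℝ ℂ)) → ‖μ‖ ≤ 1) :
    ∃ C : ℝ, 0 ≤ C ∧ ∀ (t : ℕ) (i j : ι),
      |(M ^ t) i j| ≤ C * (1 + t : ℝ) ^ (Fintype.card ι - 1) := by
  classical
  set Mc : Matrix ι ι ℂ := M.map (algebraMap ℝ ℂ) with hMc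
  have hmonic := Mc.charpoly_monic
  have hsplits : Mc.charpoly.Splits := IsAlgClosed.splits _
  set l : List ℂ := Mc.charpoly.roots.toList with hldef
  have hlen : l.length = Fintype.card ι := by
    rw [hldef, Multiset.length_toList, Polynomial.splits_iff_card_roots.mp hsplits,
      Matrix.charpoly_natDegree_eq_dim]
  have hlnorm : ∀ μ ∈ l, ‖μ‖ ≤ 1 := by
    intro μ hμ
    exact hρ μ (charpoly_root_mem_spectrum Mc μ (by rwa [← Multiset.mem_toList]))
  have hfact : Mc.charpoly = (l.map (fun a => (Polynomial.X : ℂ[X]) - Polynomial.C a)).prod := by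
    conv_lhs => rw [hsplits.eq_prod_roots_of_monic hmonic]
    conv_lhs => rw [← Multiset.coe_toList Mc.charpoly.roots]
    rw [Multiset.map_coe, Multiset.prod_coe]
  have hprod : (l.map (fun a => Mc - a • (1 : Matrix ι ι ℂ))).prod = 0 := by
    have hCH : Polynomial.aeval Mc Mc.charpoly = 0 := Matrix.aeval_self_charpoly Mc
    rw [hfact] at hCH
    rw [← hCH, map_list_prod (Polynomial.aeval Mc), List.map_map]
    have hfn : ((Polynomial.aeval Mc) ∘ fun a => (Polynomial.X : ℂ[X]) - Polynomial.C a)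
        = fun a => Mc - a • (1 : Matrix ι ι ℂ) := by
      funext a
      simp [Function.comp, Algebra.algebraMap_eq_smul_one]
    rw [hfn]
  obtain ⟨lam, ltail, hl⟩ : ∃ lam ltail, l = lam :: ltail := by
    cases hl0 : l with
    | nil =>
      rw [hl0] at hlen
      simp at hlen
      exact absurd hlen.symm Fintype.card_ne_zero
    | cons a b => exact ⟨a, b, rfl⟩
  rw [hl] at hprod hlnorm hlen
  have hbound : ∀ i j : ι, ∃ C : ℝ, 0 ≤ C ∧ ∀ t : ℕ,
      ‖(Mc ^ t) i j‖ ≤ C * (1 + t : ℝ) ^ ltail.length := by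
    intro i j
    have hop := opList_vecMul Mc j (lam :: ltail) (Pi.single i 1)
    rw [hprod] at hop
    have hzero : opList (lam :: ltail) (fun t => Matrix.vecMul (Pi.single i 1) (Mc ^ t) j) = 0 := by
      rw [hop]
      funext t
      simp [Matrix.vecMul_zero, Matrix.zero_vecMul]
    obtain ⟨C, hC0, hC⟩ := growth ltail lam (hlnorm lam (by simp))
      (fun μ hμ => hlnorm μ (by simp [hμ])) _ hzero
    refine ⟨C, hC0, fun t => ?_⟩
    have := hC t
    rwa [Matrix.single_one_vecMul] at this
  choose C hC0 hC using hbound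
  refine ⟨∑ i, ∑ j, C i j,
    Finset.sum_nonneg fun k _ => Finset.sum_nonneg fun q _ => hC0 k q, ?_⟩
  intro t i j
  have hpow : ∀ s : ℕ, (M.map (algebraMap ℝ ℂ)) ^ s = (M ^ s).map (algebraMap ℝ ℂ) := by
    intro s
    induction s with
    | zero => simp
    | succ s ih => rw [pow_succ, pow_succ, ih, Matrix.map_mul]
  have hmap : (Mc ^ t) i j = algebraMap ℝ ℂ ((M ^ t) i j) := by
    rw [hMc, hpow t]
    rfl
  have h1 : |(M ^ t) i j| = ‖(Mc ^ t) i j‖ := by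
    rw [hmap]
    simp [Complex.norm_real]
  have h2 : ltail.length = Fintype.card ι - 1 := by
    have := hlen
    simp only [List.length_cons] at this
    omega
  rw [h1, ← h2]
  calc ‖(Mc ^ t) i j‖ ≤ C i j * (1 + t : ℝ) ^ ltail.length := hC i j t
    _ ≤ (∑ i, ∑ j, C i j) * (1 + t : ℝ) ^ ltail.length := by
      have hp : (0:ℝ) ≤ (1 + t : ℝ) ^ ltail.length := by positivity
      have : C i j ≤ ∑ i, ∑ j, C i j := by
        calc C i j ≤ ∑ j, C i j := Finset.single_le_sum (fun k _ => hC0 i k) (Finset.mem_univ j)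
          _ ≤ ∑ i, ∑ j, C i j :=
            Finset.single_le_sum (fun k _ => Finset.sum_nonneg fun q _ => hC0 k q) (Finset.mem_univ i)
      exact mul_le_mul_of_nonneg_right this hp



lemma mulVec_finsum {ι : Type*} [Fintype ι] (M : Matrix ι ι ℝ) (S : Finset ℕ) (f : ℕ → ι → ℝ) :
    M.mulVec (∑ s ∈ S, f s) = ∑ s ∈ S, M.mulVec (f s) := by
  rw [show M *ᵥ (∑ s ∈ S, f s) = M.mulVecLin (∑ s ∈ S, f s) from rfl, map_sum]
  rfl

lemma sol_closed {ι : Type*} [Fintype ι] [DecidableEq ι] (M : Matrix ι ι ℝ) (v : ℕ → ι → ℝ) (b : ι → ℝ)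
    (h : ∀ t, v (t + 1) = M.mulVec (v t) + b) :
    ∀ t, v t = (M ^ t).mulVec (v 0) + ∑ s ∈ Finset.range t, (M ^ s).mulVec b := by
  intro t
  induction t with
  | zero => simp
  | succ t ih =>
    rw [h t, ih, Matrix.mulVec_add, mulVec_finsum]
    have h1 : M.mulVec ((M ^ t).mulVec (v 0)) = (M ^ (t+1)).mulVec (v 0) := by
      rw [Matrix.mulVec_mulVec, ← pow_succ']
    have h2 : ∀ s, M.mulVec ((M ^ s).mulVec b) = (M ^ (s+1)).mulVec b := by
      intro s; rw [Matrix.mulVec_mulVec, ← pow_succ']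
    rw [h1]
    have h3 : ∑ s ∈ Finset.range t, M.mulVec ((M ^ s).mulVec b)
        = ∑ s ∈ Finset.range t, (M ^ (s+1)).mulVec b := by
      refine Finset.sum_congr rfl fun s _ => h2 s
    rw [h3]
    have h4 : ∑ s ∈ Finset.range (t+1), (M ^ s).mulVec b
        = (M ^ 0).mulVec b + ∑ s ∈ Finset.range t, (M ^ (s+1)).mulVec b := by
      rw [Finset.sum_range_succ']
      simp [add_comm]
    rw [h4]
    simp [Matrix.one_mulVec]
    abel

lemma sol_bound {ι : Type*} [Fintype ι] [DecidableEq ι] [Nonempty ι]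
    (M : Matrix ι ι ℝ)
    (hρ : ∀ μ : ℂ, μ ∈ spectrum ℂ (M.map (algebraMap ℝ ℂ)) → ‖μ‖ ≤ 1)
    (v : ℕ → ι → ℝ) (b : ι → ℝ)
    (h : ∀ t, v (t + 1) = M.mulVec (v t) + b) :
    ∃ c : ℝ, 0 ≤ c ∧ ∀ (t : ℕ) (i : ι), |v t i| ≤ c * (1 + t : ℝ) ^ (Fintype.card ι) := by
  obtain ⟨C, hC0, hC⟩ := entry_bound M hρ
  set e := Fintype.card ι - 1 with he
  have hee : e + 1 = Fintype.card ι := by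
    have := Fintype.card_pos (α := ι)
    omega
  set K0 : ℝ := ∑ j, |v 0 j| with hK0
  set Kb : ℝ := ∑ j, |b j| with hKb
  have hK00 : 0 ≤ K0 := Finset.sum_nonneg fun j _ => abs_nonneg _
  have hKb0 : 0 ≤ Kb := Finset.sum_nonneg fun j _ => abs_nonneg _
  have hent : ∀ (s : ℕ) (i : ι) (y : ι → ℝ),
      |(M ^ s).mulVec y i| ≤ C * (1 + s : ℝ) ^ e * ∑ j, |y j| := by
    intro s i y
    calc |(M ^ s).mulVec y i| = |∑ j, (M ^ s) i j * y j| := rfl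
      _ ≤ ∑ j, |(M ^ s) i j * y j| := Finset.abs_sum_le_sum_abs _ _
      _ ≤ ∑ j, C * (1 + s : ℝ) ^ e * |y j| := by
          refine Finset.sum_le_sum fun j _ => ?_
          rw [abs_mul]
          exact mul_le_mul_of_nonneg_right (hC s i j) (abs_nonneg _)
      _ = C * (1 + s : ℝ) ^ e * ∑ j, |y j| := by rw [← Finset.mul_sum]
  refine ⟨C * (K0 + Kb), by positivity, ?_⟩
  intro t i
  have ht0 : (0 : ℝ) ≤ (t : ℝ) := Nat.cast_nonneg t
  have ht1 : (1 : ℝ) ≤ 1 + t := by linarith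
  have hmono : ∀ s : ℕ, s < t → (1 + s : ℝ) ^ e ≤ (1 + t : ℝ) ^ e := by
    intro s hs
    have : (s : ℝ) ≤ t := by exact_mod_cast hs.le
    exact pow_le_pow_left₀ (by positivity) (by linarith) _
  rw [sol_closed M v b h t]
  calc |((M ^ t).mulVec (v 0) + ∑ s ∈ Finset.range t, (M ^ s).mulVec b) i|
      ≤ |(M ^ t).mulVec (v 0) i| + |(∑ s ∈ Finset.range t, (M ^ s).mulVec b) i| := by
        exact abs_add_le _ _
    _ ≤ C * (1 + t : ℝ) ^ e * K0 + ∑ s ∈ Finset.range t, |(M ^ s).mulVec b i| := by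
        refine add_le_add (hent t i (v 0)) ?_
        have : (∑ s ∈ Finset.range t, (M ^ s).mulVec b) i
            = ∑ s ∈ Finset.range t, (M ^ s).mulVec b i := by
          simp [Finset.sum_apply]
        rw [this]
        exact Finset.abs_sum_le_sum_abs _ _
    _ ≤ C * (1 + t : ℝ) ^ e * K0 + ∑ s ∈ Finset.range t, C * (1 + t : ℝ) ^ e * Kb := by
        refine add_le_add_right (Finset.sum_le_sum fun s hs => ?_) _
        calc |(M ^ s).mulVec b i| ≤ C * (1 + s : ℝ) ^ e * Kb := hent s i b
          _ ≤ C * (1 + t : ℝ) ^ e * Kb := by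
            refine mul_le_mul_of_nonneg_right (mul_le_mul_of_nonneg_left
              (hmono s (Finset.mem_range.mp hs)) hC0) hKb0
    _ = C * (1 + t : ℝ) ^ e * K0 + t * (C * (1 + t : ℝ) ^ e * Kb) := by
        rw [Finset.sum_const, Finset.card_range]; simp [mul_comm]
    _ ≤ C * (K0 + Kb) * (1 + t : ℝ) ^ (Fintype.card ι) := by
        rw [← hee, pow_succ]
        have hpe : (0:ℝ) ≤ (1 + t : ℝ) ^ e := by positivity
        nlinarith [mul_nonneg (mul_nonneg hC0 hpe) hK00, mul_nonneg (mul_nonneg hC0 hpe) hKb0]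



lemma measurable_mulVec_comp {α : Type*} [MeasurableSpace α] {k l : ℕ}
    (M : Matrix (Fin k) (Fin l) ℝ) {g : α → Fin l → ℝ} (hg : Measurable g) :
    Measurable fun a => M.mulVec (g a) := by
  rw [measurable_pi_iff]
  intro i
  simp only [Matrix.mulVec, dotProduct]
  exact Finset.measurable_sum _ fun p _ => ((measurable_pi_apply p).comp hg).const_mul _

lemma pow_one_add_le (N t : ℕ) : ((1 : ℝ) + t) ^ N ≤ 2 ^ N * (1 + (t : ℝ) ^ N) := by
  have h2 : (1:ℝ) ≤ 2 ^ N := one_le_pow₀ one_le_two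
  rcases Nat.eq_zero_or_pos t with h | h
  · subst h
    simp only [Nat.cast_zero, add_zero, one_pow]
    rcases Nat.eq_zero_or_pos N with h0 | h0
    · subst h0; norm_num
    · rw [zero_pow h0.ne']
      nlinarith
  · have h1 : (1:ℝ) ≤ t := by exact_mod_cast h
    calc ((1:ℝ)+t)^N ≤ (2*t)^N := pow_le_pow_left₀ (by linarith) (by linarith) N
      _ = 2^N * (t:ℝ)^N := mul_pow _ _ _
      _ ≤ 2^N * (1 + (t:ℝ)^N) := by nlinarith [pow_nonneg (le_trans zero_le_one h1) N]

end Stmt11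



open MeasureTheory ProbabilityTheory Matrix

/-- Polynomial mean-square growth of a marginally stable bilinear system:
if `Ã := A⊗A + σ_u² Σ_k B_k ⊗ B_k` has spectral radius at most 1, then there
exist `c < ∞` and an integer `0 ≤ r ≤ n²` with `E[‖x_t‖₂²] ≤ c (1 + t^r)`. -/
theorem stmt_11
    {Ω : Type*} [MeasurableSpace Ω] (P : Measure Ω) [IsProbabilityMeasure P]
    (n m : ℕ)
    (A : Matrix (Fin n) (Fin n) ℝ) (B : Fin m → Matrix (Fin n) (Fin n) ℝ)
    (x : ℕ → Ω → Fin n → ℝ) (u : ℕ → Ω → Fin m → ℝ) (w : ℕ → Ω → Fin n → ℝ)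
    (σu : ℝ) (Sw : Matrix (Fin n) (Fin n) ℝ)
    -- dynamics
    (hdyn : ∀ t ω, x (t + 1) ω
      = A.mulVec (x t ω) + (∑ i, u t ω i • (B i).mulVec (x t ω)) + w t ω)
    -- measurability
    (hxm : ∀ t, Measurable (x t)) (hum : ∀ t, Measurable (u t))
    (hwm : ∀ t, Measurable (w t))
    -- i.i.d. inputs and noises
    (huid : ∀ t, IdentDistrib (u t) (u 0) P P)
    (hwid : ∀ t, IdentDistrib (w t) (w 0) P P)
    -- zero means
    (humean : ∀ t i, ∫ ω, u t ω i ∂P = 0)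
    (hwmean : ∀ t i, ∫ ω, w t ω i ∂P = 0)
    -- covariances
    (hucov : ∀ t i j, ∫ ω, u t ω i * u t ω j ∂P = if i = j then σu ^ 2 else 0)
    (hwcov : ∀ t i j, ∫ ω, w t ω i * w t ω j ∂P = Sw i j)
    -- mutual independence of x₀, the inputs, and the noises
    (hindep : iIndepFun
      (m := fun _ : Option (ℕ ⊕ ℕ) =>
        (inferInstance : MeasurableSpace ((Fin m → ℝ) ⊕ (Fin n → ℝ))))
      (fun o : Option (ℕ ⊕ ℕ) => match o with
        | none => fun ω => Sum.inr (x 0 ω)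
        | some (Sum.inl t) => fun ω => Sum.inl (u t ω)
        | some (Sum.inr t) => fun ω => Sum.inr (w t ω)) P)
    -- integrability of the relevant products
    (hIntxx : ∀ t i j, Integrable (fun ω => x t ω i * x t ω j) P)
    (hIntux : ∀ t i j k l, Integrable (fun ω => u t ω i * u t ω j * x t ω k * x t ω l) P)
    (hIntux1 : ∀ t i k l, Integrable (fun ω => u t ω i * x t ω k * x t ω l) P)
    (hIntwx : ∀ t i k, Integrable (fun ω => w t ω i * x t ω k) P)
    (hIntwux : ∀ t i j k, Integrable (fun ω => w t ω i * u t ω j * x t ω k) P)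
    (hIntww : ∀ t i j, Integrable (fun ω => w t ω i * w t ω j) P)
    -- spectral radius of the augmented matrix is at most 1
    (hρ : ∀ μ : ℂ,
      μ ∈ spectrum ℂ
        ((Matrix.kroneckerMap (· * ·) A A
            + σu ^ 2 • ∑ k, Matrix.kroneckerMap (· * ·) (B k) (B k)).map
          (algebraMap ℝ ℂ)) → ‖μ‖ ≤ 1) :
    ∃ (c : ℝ) (r : ℕ), 0 ≤ c ∧ r ≤ n ^ 2 ∧
      ∀ t : ℕ, ∫ ω, (∑ i, (x t ω i) ^ 2) ∂P ≤ c * (1 + (t : ℝ) ^ r) := by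
  classical
  rcases Nat.eq_zero_or_pos n with hn | hn
  · refine ⟨1, 0, zero_le_one, by simp, fun t => ?_⟩
    subst hn
    simp
  haveI : Nonempty (Fin n) := ⟨⟨0, hn⟩⟩
  -- notation
  set F : Option (ℕ ⊕ ℕ) → Ω → ((Fin m → ℝ) ⊕ (Fin n → ℝ)) :=
    (fun o : Option (ℕ ⊕ ℕ) => match o with
      | none => fun ω => Sum.inr (x 0 ω)
      | some (Sum.inl t) => fun ω => Sum.inl (u t ω)
      | some (Sum.inr t) => fun ω => Sum.inr (w t ω)) with hFdef
  have hindep' : iIndepFun (m := fun _ : Option (ℕ ⊕ ℕ) =>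
      (inferInstance : MeasurableSpace ((Fin m → ℝ) ⊕ (Fin n → ℝ)))) F P := hindep
  set hU : ((Fin m → ℝ) ⊕ (Fin n → ℝ)) → (Fin m → ℝ) := Sum.elim id (fun _ => 0) with hUdef
  set hW : ((Fin m → ℝ) ⊕ (Fin n → ℝ)) → (Fin n → ℝ) := Sum.elim (fun _ => 0) id with hWdef
  have hUm : Measurable hU := measurable_id.sumElim measurable_const
  have hWm : Measurable hW := measurable_const.sumElim measurable_id
  have hFm : ∀ o, Measurable (F o) := by
    rintro (_ | (s | s))
    · exact measurable_inr.comp (hxm 0)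
    · exact measurable_inl.comp (hum s)
    · exact measurable_inr.comp (hwm s)
  set T : ℕ → Finset (Option (ℕ ⊕ ℕ)) := fun t =>
    insert none (((Finset.range t).image (fun s => some (Sum.inl s)))
      ∪ ((Finset.range t).image (fun s => some (Sum.inr s)))) with hTdef
  have hmemT : ∀ t o, o ∈ T t ↔ (o = none ∨ (∃ s < t, o = some (Sum.inl s))
      ∨ (∃ s < t, o = some (Sum.inr s))) := by
    intro t o
    simp only [hTdef, Finset.mem_insert, Finset.mem_union, Finset.mem_image, Finset.mem_range]
    constructor
    · rintro (h | ⟨s, hs, rfl⟩ | ⟨s, hs, rfl⟩)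
      · exact Or.inl h
      · exact Or.inr (Or.inl ⟨s, hs, rfl⟩)
      · exact Or.inr (Or.inr ⟨s, hs, rfl⟩)
    · rintro (h | ⟨s, hs, rfl⟩ | ⟨s, hs, rfl⟩)
      · exact Or.inl h
      · exact Or.inr (Or.inl ⟨s, hs, rfl⟩)
      · exact Or.inr (Or.inr ⟨s, hs, rfl⟩)
  have hxG : ∀ t, ∃ G : ({o // o ∈ T t} → ((Fin m → ℝ) ⊕ (Fin n → ℝ)))
      → (Fin n → ℝ), Measurable G ∧ ∀ ω, x t ω = G (fun i => F i.1 ω) := by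
    intro t
    induction t with
    | zero =>
      have hmem : none ∈ T 0 := by rw [hmemT]; exact Or.inl rfl
      refine ⟨fun g => hW (g ⟨none, hmem⟩), hWm.comp (measurable_pi_apply _), fun ω => rfl⟩
    | succ t ih =>
      obtain ⟨G, hGm, hGx⟩ := ih
      have hsub : T t ⊆ T (t + 1) := by
        intro o ho
        rw [hmemT] at ho ⊢
        rcases ho with h | ⟨s, hs, rfl⟩ | ⟨s, hs, rfl⟩
        · exact Or.inl h
        · exact Or.inr (Or.inl ⟨s, by omega, rfl⟩)
        · exact Or.inr (Or.inr ⟨s, by omega, rfl⟩)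
      have hm1 : some (Sum.inl t) ∈ T (t + 1) := by
        rw [hmemT]; exact Or.inr (Or.inl ⟨t, by omega, rfl⟩)
      have hm2 : some (Sum.inr t) ∈ T (t + 1) := by
        rw [hmemT]; exact Or.inr (Or.inr ⟨t, by omega, rfl⟩)
      refine ⟨fun g =>
        A.mulVec (G (fun i => g ⟨i.1, hsub i.2⟩))
          + (∑ k, hU (g ⟨some (Sum.inl t), hm1⟩) k • (B k).mulVec (G (fun i => g ⟨i.1, hsub i.2⟩)))
          + hW (g ⟨some (Sum.inr t), hm2⟩), ?_, ?_⟩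
      · have hrestr : Measurable (fun (g : {o // o ∈ T (t+1)}
            → ((Fin m → ℝ) ⊕ (Fin n → ℝ))) (i : {o // o ∈ T t}) =>
            g ⟨i.1, hsub i.2⟩) := measurable_pi_lambda _ fun i => measurable_pi_apply _
        have hv : Measurable (fun (g : {o // o ∈ T (t+1)} → ((Fin m → ℝ) ⊕ (Fin n → ℝ)))
            => G (fun i => g ⟨i.1, hsub i.2⟩)) := hGm.comp hrestr
        rw [measurable_pi_iff]
        intro j
        simp only [Pi.add_apply, Finset.sum_apply, Pi.smul_apply, smul_eq_mul]
        apply Measurable.add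
        apply Measurable.add
        · exact (measurable_pi_apply j).comp (Stmt11.measurable_mulVec_comp A hv)
        · refine Finset.measurable_sum _ fun k _ => Measurable.mul ?_ ?_
          · exact (measurable_pi_apply k).comp (hUm.comp (measurable_pi_apply _))
          · exact (measurable_pi_apply j).comp (Stmt11.measurable_mulVec_comp (B k) hv)
        · exact (measurable_pi_apply j).comp (hWm.comp (measurable_pi_apply _))
      · intro ω
        rw [hdyn t ω, hGx ω]
        rfl
  have hI1 : ∀ t, IndepFun (u t) (x t) P := by
    intro t
    obtain ⟨G, hGm, hGx⟩ := hxG t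
    have hdisj : Disjoint ({some (Sum.inl t)} : Finset (Option (ℕ ⊕ ℕ))) (T t) := by
      rw [Finset.disjoint_left]
      intro o ho hoT
      rw [Finset.mem_singleton] at ho
      subst ho
      rw [hmemT] at hoT
      rcases hoT with h | ⟨s, hs, h⟩ | ⟨s, hs, h⟩ <;> simp_all <;> omega
    have hbase := hindep'.indepFun_finset {some (Sum.inl t)} (T t) hdisj hFm
    have h := hbase.comp
      (φ := fun (g : {o // o ∈ ({some (Sum.inl t)} : Finset (Option (ℕ ⊕ ℕ)))}
          → ((Fin m → ℝ) ⊕ (Fin n → ℝ))) =>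
        hU (g ⟨some (Sum.inl t), Finset.mem_singleton_self _⟩))
      (ψ := G) (hUm.comp (measurable_pi_apply _)) hGm
    have e2 : (G ∘ fun ω (i : {o // o ∈ T t}) => F i.1 ω) = x t :=
      funext fun ω => (hGx ω).symm
    rw [show ((fun (g : {o // o ∈ ({some (Sum.inl t)} : Finset (Option (ℕ ⊕ ℕ)))}
          → ((Fin m → ℝ) ⊕ (Fin n → ℝ))) =>
        hU (g ⟨some (Sum.inl t), Finset.mem_singleton_self _⟩))
        ∘ fun ω (i : {o // o ∈ ({some (Sum.inl t)} : Finset (Option (ℕ ⊕ ℕ)))}) => F i.1 ω)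
        = u t from rfl, e2] at h
    exact h
  have hI2 : ∀ t, IndepFun (w t) (fun ω => (u t ω, x t ω)) P := by
    intro t
    obtain ⟨G, hGm, hGx⟩ := hxG t
    have hdisj : Disjoint ({some (Sum.inr t)} : Finset (Option (ℕ ⊕ ℕ)))
        (insert (some (Sum.inl t)) (T t)) := by
      rw [Finset.disjoint_left]
      intro o ho hoT
      rw [Finset.mem_singleton] at ho
      subst ho
      rw [Finset.mem_insert, hmemT] at hoT
      rcases hoT with h | h | ⟨s, hs, h⟩ | ⟨s, hs, h⟩ <;> simp_all <;> omega
    have hbase := hindep'.indepFun_finset {some (Sum.inr t)}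
      (insert (some (Sum.inl t)) (T t)) hdisj hFm
    have h := hbase.comp
      (φ := fun (g : {o // o ∈ ({some (Sum.inr t)} : Finset (Option (ℕ ⊕ ℕ)))}
          → ((Fin m → ℝ) ⊕ (Fin n → ℝ))) =>
        hW (g ⟨some (Sum.inr t), Finset.mem_singleton_self _⟩))
      (ψ := fun (g : {o // o ∈ insert (some (Sum.inl t)) (T t)}
          → ((Fin m → ℝ) ⊕ (Fin n → ℝ))) =>
        (hU (g ⟨some (Sum.inl t), Finset.mem_insert_self _ _⟩),
         G (fun i => g ⟨i.1, Finset.mem_insert_of_mem i.2⟩)))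
      (hWm.comp (measurable_pi_apply _))
      ((hUm.comp (measurable_pi_apply _)).prodMk
        (hGm.comp (measurable_pi_lambda _ fun i => measurable_pi_apply _)))
    have e1 : ((fun (g : {o // o ∈ ({some (Sum.inr t)} : Finset (Option (ℕ ⊕ ℕ)))}
          → ((Fin m → ℝ) ⊕ (Fin n → ℝ))) =>
        hW (g ⟨some (Sum.inr t), Finset.mem_singleton_self _⟩))
        ∘ fun ω (i : {o // o ∈ ({some (Sum.inr t)} : Finset (Option (ℕ ⊕ ℕ)))}) => F i.1 ω)
        = w t := rfl
    have e2 : ((fun (g : {o // o ∈ insert (some (Sum.inl t)) (T t)}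
          → ((Fin m → ℝ) ⊕ (Fin n → ℝ))) =>
        (hU (g ⟨some (Sum.inl t), Finset.mem_insert_self _ _⟩),
         G (fun i => g ⟨i.1, Finset.mem_insert_of_mem i.2⟩)))
        ∘ fun ω (i : {o // o ∈ insert (some (Sum.inl t)) (T t)}) => F i.1 ω)
        = fun ω => (u t ω, x t ω) := by
      funext ω
      show (_, G _) = (u t ω, x t ω)
      rw [hGx ω]
      rfl
    rw [e1, e2] at h
    exact h
  have hI3 : ∀ t, IndepFun (w t) (x t) P := by
    intro t
    have h := (hI2 t).comp measurable_id measurable_snd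
    rw [show (Prod.snd ∘ fun ω => (u t ω, x t ω)) = x t from rfl] at h
    exact h
  -- auxiliary integral splitting
  have integral_add9 : ∀ (f1 f2 f3 f4 f5 f6 f7 f8 f9 : Ω → ℝ),
      Integrable f1 P → Integrable f2 P → Integrable f3 P → Integrable f4 P →
      Integrable f5 P → Integrable f6 P → Integrable f7 P → Integrable f8 P →
      Integrable f9 P →
      ∫ ω, (f1 ω + f2 ω + f3 ω + f4 ω + f5 ω + f6 ω + f7 ω + f8 ω + f9 ω) ∂P
        = (∫ ω, f1 ω ∂P) + (∫ ω, f2 ω ∂P) + (∫ ω, f3 ω ∂P) + (∫ ω, f4 ω ∂P)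
          + (∫ ω, f5 ω ∂P) + (∫ ω, f6 ω ∂P) + (∫ ω, f7 ω ∂P) + (∫ ω, f8 ω ∂P)
          + (∫ ω, f9 ω ∂P) := by
    intro f1 f2 f3 f4 f5 f6 f7 f8 f9 h1 h2 h3 h4 h5 h6 h7 h8 h9
    have H2 : Integrable (fun ω => f1 ω + f2 ω) P := by exact h1.add h2
    have H3 : Integrable (fun ω => f1 ω + f2 ω + f3 ω) P := by exact H2.add h3
    have H4 : Integrable (fun ω => f1 ω + f2 ω + f3 ω + f4 ω) P := by exact H3.add h4
    have H5 : Integrable (fun ω => f1 ω + f2 ω + f3 ω + f4 ω + f5 ω) P := by exact H4.add h5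
    have H6 : Integrable (fun ω => f1 ω + f2 ω + f3 ω + f4 ω + f5 ω + f6 ω) P := by
      exact H5.add h6
    have H7 : Integrable (fun ω => f1 ω + f2 ω + f3 ω + f4 ω + f5 ω + f6 ω + f7 ω) P := by
      exact H6.add h7
    have H8 : Integrable (fun ω => f1 ω + f2 ω + f3 ω + f4 ω + f5 ω + f6 ω + f7 ω + f8 ω) P := by
      exact H7.add h8
    rw [integral_add H8 h9, integral_add H7 h8, integral_add H6 h7, integral_add H5 h6,
      integral_add H4 h5, integral_add H3 h4, integral_add H2 h3, integral_add h1 h2]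
  have hue : ∀ (t : ℕ) (k : Fin m), Measurable fun ω => u t ω k :=
    fun t k => (measurable_pi_apply k).comp (hum t)
  have hwe : ∀ (t : ℕ) (i : Fin n), Measurable fun ω => w t ω i :=
    fun t i => (measurable_pi_apply i).comp (hwm t)
  -- the transition matrix and second-moment vector
  set M : Matrix (Fin n × Fin n) (Fin n × Fin n) ℝ :=
    Matrix.kroneckerMap (· * ·) A A + σu ^ 2 • ∑ k, Matrix.kroneckerMap (· * ·) (B k) (B k)
    with hMdef
  set Svec : ℕ → (Fin n × Fin n) → ℝ := fun t p => ∫ ω, x t ω p.1 * x t ω p.2 ∂P with hSdef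
  set bvec : (Fin n × Fin n) → ℝ := fun p => Sw p.1 p.2 with hbdef
  have hrec : ∀ t, Svec (t + 1) = M.mulVec (Svec t) + bvec := by
    intro t
    -- helper zero/second-moment integral identities
    have hzero_u : ∀ (k : Fin m) (g : (Fin n → ℝ) → ℝ), Measurable g →
        ∫ ω, u t ω k * g (x t ω) ∂P = 0 := by
      intro k g hg
      have h : (∫ ω, u t ω k * g (x t ω) ∂P)
          = (∫ ω, u t ω k ∂P) * ∫ ω, g (x t ω) ∂P :=
        ProbabilityTheory.IndepFun.integral_fun_mul_eq_mul_integral ((hI1 t).comp (measurable_pi_apply k) hg)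
          ((hue t k).aestronglyMeasurable) ((hg.comp (hxm t)).aestronglyMeasurable)
      rw [h, humean t k, zero_mul]
    have hzero_w : ∀ (jj : Fin n) (g : (Fin m → ℝ) × (Fin n → ℝ) → ℝ), Measurable g →
        ∫ ω, w t ω jj * g (u t ω, x t ω) ∂P = 0 := by
      intro jj g hg
      have h : (∫ ω, w t ω jj * g (u t ω, x t ω) ∂P)
          = (∫ ω, w t ω jj ∂P) * ∫ ω, g (u t ω, x t ω) ∂P :=
        ProbabilityTheory.IndepFun.integral_fun_mul_eq_mul_integral ((hI2 t).comp (measurable_pi_apply jj) hg)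
          ((hwe t jj).aestronglyMeasurable)
          ((hg.comp ((hum t).prodMk (hxm t))).aestronglyMeasurable)
      rw [h, hwmean t jj, zero_mul]
    have huu : ∀ (k l : Fin m) (g : (Fin n → ℝ) → ℝ), Measurable g →
        ∫ ω, (u t ω k * u t ω l) * g (x t ω) ∂P
          = (if k = l then σu ^ 2 else 0) * ∫ ω, g (x t ω) ∂P := by
      intro k l g hg
      have h : (∫ ω, (u t ω k * u t ω l) * g (x t ω) ∂P)
          = (∫ ω, u t ω k * u t ω l ∂P) * ∫ ω, g (x t ω) ∂P :=
        ProbabilityTheory.IndepFun.integral_fun_mul_eq_mul_integral ((hI1 t).comp ((measurable_pi_apply k).mul (measurable_pi_apply l)) hg)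
          (((hue t k).mul (hue t l)).aestronglyMeasurable)
          ((hg.comp (hxm t)).aestronglyMeasurable)
      rw [h, hucov t k l]
    -- pointwise expansion of quadratic forms
    have hptXX : ∀ (M1 M2 : Matrix (Fin n) (Fin n) ℝ) (i j : Fin n) (ω : Ω),
        M1.mulVec (x t ω) i * M2.mulVec (x t ω) j
          = ∑ p, ∑ q, (M1 i p * M2 j q) * (x t ω p * x t ω q) := by
      intro M1 M2 i j ω
      simp only [Matrix.mulVec, dotProduct]
      rw [Finset.sum_mul_sum]
      exact Finset.sum_congr rfl fun p _ => Finset.sum_congr rfl fun q _ => by ring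
    have hXX : ∀ (M1 M2 : Matrix (Fin n) (Fin n) ℝ) (i j : Fin n),
        ∫ ω, M1.mulVec (x t ω) i * M2.mulVec (x t ω) j ∂P
          = ∑ p, ∑ q, (M1 i p * M2 j q) * Svec t (p, q) := by
      intro M1 M2 i j
      rw [show (fun ω => M1.mulVec (x t ω) i * M2.mulVec (x t ω) j)
          = fun ω => ∑ p, ∑ q, (M1 i p * M2 j q) * (x t ω p * x t ω q) from
        funext fun ω => hptXX M1 M2 i j ω]
      rw [integral_finset_sum _ (fun p _ => integrable_finset_sum _ fun q _ =>
        (hIntxx t p q).const_mul _)]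
      refine Finset.sum_congr rfl fun p _ => ?_
      rw [integral_finset_sum _ (fun q _ => (hIntxx t p q).const_mul _)]
      refine Finset.sum_congr rfl fun q _ => ?_
      rw [integral_const_mul]
    -- integrability of composite products
    have HIab : ∀ (M1 M2 : Matrix (Fin n) (Fin n) ℝ) (i j : Fin n),
        Integrable (fun ω => M1.mulVec (x t ω) i * M2.mulVec (x t ω) j) P := by
      intro M1 M2 i j
      rw [show (fun ω => M1.mulVec (x t ω) i * M2.mulVec (x t ω) j)
          = fun ω => ∑ p, ∑ q, (M1 i p * M2 j q) * (x t ω p * x t ω q) from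
        funext fun ω => hptXX M1 M2 i j ω]
      exact integrable_finset_sum _ fun p _ => integrable_finset_sum _ fun q _ =>
        (hIntxx t p q).const_mul _
    have HIu1 : ∀ (k : Fin m) (M1 M2 : Matrix (Fin n) (Fin n) ℝ) (i j : Fin n),
        Integrable (fun ω => u t ω k * (M1.mulVec (x t ω) i * M2.mulVec (x t ω) j)) P := by
      intro k M1 M2 i j
      have hpt : (fun ω => u t ω k * (M1.mulVec (x t ω) i * M2.mulVec (x t ω) j))
          = fun ω => ∑ p, ∑ q, (M1 i p * M2 j q) * (u t ω k * x t ω p * x t ω q) := by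
        funext ω
        rw [hptXX M1 M2 i j ω, Finset.mul_sum]
        refine Finset.sum_congr rfl fun p _ => ?_
        rw [Finset.mul_sum]
        exact Finset.sum_congr rfl fun q _ => by ring
      rw [hpt]
      exact integrable_finset_sum _ fun p _ => integrable_finset_sum _ fun q _ =>
        (hIntux1 t k p q).const_mul _
    have HIuu : ∀ (k l : Fin m) (i j : Fin n),
        Integrable (fun ω => (u t ω k * u t ω l)
          * ((B k).mulVec (x t ω) i * (B l).mulVec (x t ω) j)) P := by
      intro k l i j
      have hpt : (fun ω => (u t ω k * u t ω l)
            * ((B k).mulVec (x t ω) i * (B l).mulVec (x t ω) j))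
          = fun ω => ∑ p, ∑ q, (B k i p * B l j q)
            * (u t ω k * u t ω l * x t ω p * x t ω q) := by
        funext ω
        rw [hptXX (B k) (B l) i j ω, Finset.mul_sum]
        refine Finset.sum_congr rfl fun p _ => ?_
        rw [Finset.mul_sum]
        exact Finset.sum_congr rfl fun q _ => by ring
      rw [hpt]
      exact integrable_finset_sum _ fun p _ => integrable_finset_sum _ fun q _ =>
        (hIntux t k l p q).const_mul _
    have HIwx1 : ∀ (jj i : Fin n) (M1 : Matrix (Fin n) (Fin n) ℝ),
        Integrable (fun ω => w t ω jj * M1.mulVec (x t ω) i) P := by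
      intro jj i M1
      have hpt : (fun ω => w t ω jj * M1.mulVec (x t ω) i)
          = fun ω => ∑ p, M1 i p * (w t ω jj * x t ω p) := by
        funext ω
        simp only [Matrix.mulVec, dotProduct, Finset.mul_sum]
        exact Finset.sum_congr rfl fun p _ => by ring
      rw [hpt]
      exact integrable_finset_sum _ fun p _ => (hIntwx t jj p).const_mul _
    have HIwux : ∀ (jj : Fin n) (k : Fin m) (i : Fin n) (M1 : Matrix (Fin n) (Fin n) ℝ),
        Integrable (fun ω => w t ω jj * (u t ω k * M1.mulVec (x t ω) i)) P := by
      intro jj k i M1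
      have hpt : (fun ω => w t ω jj * (u t ω k * M1.mulVec (x t ω) i))
          = fun ω => ∑ p, M1 i p * (w t ω jj * u t ω k * x t ω p) := by
        funext ω
        simp only [Matrix.mulVec, dotProduct, Finset.mul_sum]
        exact Finset.sum_congr rfl fun p _ => by ring
      rw [hpt]
      exact integrable_finset_sum _ fun p _ => (hIntwux t jj k p).const_mul _
    -- now fix the entry
    funext pq
    obtain ⟨i, j⟩ := pq
    show (∫ ω, x (t+1) ω i * x (t+1) ω j ∂P) = _
    -- the nine-term pointwise split
    have hsplit : (fun ω => x (t+1) ω i * x (t+1) ω j)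
        = fun ω => (A.mulVec (x t ω) i * A.mulVec (x t ω) j)
          + (A.mulVec (x t ω) i * (∑ k, u t ω k • (B k).mulVec (x t ω)) j)
          + (w t ω j * A.mulVec (x t ω) i)
          + ((∑ k, u t ω k • (B k).mulVec (x t ω)) i * A.mulVec (x t ω) j)
          + ((∑ k, u t ω k • (B k).mulVec (x t ω)) i
              * (∑ k, u t ω k • (B k).mulVec (x t ω)) j)
          + (w t ω j * (∑ k, u t ω k • (B k).mulVec (x t ω)) i)
          + (w t ω i * A.mulVec (x t ω) j)
          + (w t ω i * (∑ k, u t ω k • (B k).mulVec (x t ω)) j)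
          + (w t ω i * w t ω j) := by
      funext ω
      rw [hdyn t ω]
      simp only [Pi.add_apply]
      ring
    -- pointwise sum expansions for the mixed terms
    have hptb : ∀ (ω : Ω) (jj : Fin n), (∑ k, u t ω k • (B k).mulVec (x t ω)) jj
        = ∑ k, u t ω k * (B k).mulVec (x t ω) jj := by
      intro ω jj
      simp [Finset.sum_apply, Pi.smul_apply, smul_eq_mul]
    have hpt2 : (fun ω => A.mulVec (x t ω) i * (∑ k, u t ω k • (B k).mulVec (x t ω)) j)
        = fun ω => ∑ k, u t ω k * (A.mulVec (x t ω) i * (B k).mulVec (x t ω) j) := by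
      funext ω
      rw [hptb ω j, Finset.mul_sum]
      exact Finset.sum_congr rfl fun k _ => by ring
    have hpt4 : (fun ω => (∑ k, u t ω k • (B k).mulVec (x t ω)) i * A.mulVec (x t ω) j)
        = fun ω => ∑ k, u t ω k * ((B k).mulVec (x t ω) i * A.mulVec (x t ω) j) := by
      funext ω
      rw [hptb ω i, Finset.sum_mul]
      exact Finset.sum_congr rfl fun k _ => by ring
    have hpt5 : (fun ω => (∑ k, u t ω k • (B k).mulVec (x t ω)) i
          * (∑ k, u t ω k • (B k).mulVec (x t ω)) j)
        = fun ω => ∑ k, ∑ l, (u t ω k * u t ω l)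
            * ((B k).mulVec (x t ω) i * (B l).mulVec (x t ω) j) := by
      funext ω
      rw [hptb ω i, hptb ω j, Finset.sum_mul_sum]
      exact Finset.sum_congr rfl fun k _ => Finset.sum_congr rfl fun l _ => by ring
    have hpt6 : (fun ω => w t ω j * (∑ k, u t ω k • (B k).mulVec (x t ω)) i)
        = fun ω => ∑ k, w t ω j * (u t ω k * (B k).mulVec (x t ω) i) := by
      funext ω
      rw [hptb ω i, Finset.mul_sum]
    have hpt8 : (fun ω => w t ω i * (∑ k, u t ω k • (B k).mulVec (x t ω)) j)
        = fun ω => ∑ k, w t ω i * (u t ω k * (B k).mulVec (x t ω) j) := by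
      funext ω
      rw [hptb ω j, Finset.mul_sum]
    -- integrability of the nine terms
    have hInt1 : Integrable (fun ω => A.mulVec (x t ω) i * A.mulVec (x t ω) j) P := HIab A A i j
    have hInt2 : Integrable (fun ω => A.mulVec (x t ω) i
        * (∑ k, u t ω k • (B k).mulVec (x t ω)) j) P := by
      rw [hpt2]
      exact integrable_finset_sum _ fun k _ => HIu1 k A (B k) i j
    have hInt3 : Integrable (fun ω => w t ω j * A.mulVec (x t ω) i) P := HIwx1 j i A
    have hInt4 : Integrable (fun ω => (∑ k, u t ω k • (B k).mulVec (x t ω)) i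
        * A.mulVec (x t ω) j) P := by
      rw [hpt4]
      exact integrable_finset_sum _ fun k _ => HIu1 k (B k) A i j
    have hInt5 : Integrable (fun ω => (∑ k, u t ω k • (B k).mulVec (x t ω)) i
        * (∑ k, u t ω k • (B k).mulVec (x t ω)) j) P := by
      rw [hpt5]
      exact integrable_finset_sum _ fun k _ => integrable_finset_sum _ fun l _ => HIuu k l i j
    have hInt6 : Integrable (fun ω => w t ω j
        * (∑ k, u t ω k • (B k).mulVec (x t ω)) i) P := by
      rw [hpt6]
      exact integrable_finset_sum _ fun k _ => HIwux j k i (B k)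
    have hInt7 : Integrable (fun ω => w t ω i * A.mulVec (x t ω) j) P := HIwx1 i j A
    have hInt8 : Integrable (fun ω => w t ω i
        * (∑ k, u t ω k • (B k).mulVec (x t ω)) j) P := by
      rw [hpt8]
      exact integrable_finset_sum _ fun k _ => HIwux i k j (B k)
    have hInt9 : Integrable (fun ω => w t ω i * w t ω j) P := hIntww t i j
    -- values of the nine integrals
    have hJ1 : ∫ ω, A.mulVec (x t ω) i * A.mulVec (x t ω) j ∂P
        = ∑ p, ∑ q, (A i p * A j q) * Svec t (p, q) := hXX A A i j
    have hJ2 : ∫ ω, A.mulVec (x t ω) i * (∑ k, u t ω k • (B k).mulVec (x t ω)) j ∂P = 0 := by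
      rw [hpt2, integral_finset_sum _ (fun k _ => HIu1 k A (B k) i j)]
      refine Finset.sum_eq_zero fun k _ => ?_
      exact hzero_u k (fun y => A.mulVec y i * (B k).mulVec y j)
        (((measurable_pi_apply i).comp (Stmt11.measurable_mulVec_comp A measurable_id)).mul
          ((measurable_pi_apply j).comp (Stmt11.measurable_mulVec_comp (B k) measurable_id)))
    have hJ3 : ∫ ω, w t ω j * A.mulVec (x t ω) i ∂P = 0 :=
      hzero_w j (fun z => A.mulVec z.2 i)
        ((measurable_pi_apply i).comp (Stmt11.measurable_mulVec_comp A measurable_snd))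
    have hJ4 : ∫ ω, (∑ k, u t ω k • (B k).mulVec (x t ω)) i * A.mulVec (x t ω) j ∂P = 0 := by
      rw [hpt4, integral_finset_sum _ (fun k _ => HIu1 k (B k) A i j)]
      refine Finset.sum_eq_zero fun k _ => ?_
      exact hzero_u k (fun y => (B k).mulVec y i * A.mulVec y j)
        (((measurable_pi_apply i).comp (Stmt11.measurable_mulVec_comp (B k) measurable_id)).mul
          ((measurable_pi_apply j).comp (Stmt11.measurable_mulVec_comp A measurable_id)))
    have hJ5 : ∫ ω, (∑ k, u t ω k • (B k).mulVec (x t ω)) i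
          * (∑ k, u t ω k • (B k).mulVec (x t ω)) j ∂P
        = ∑ k, σu ^ 2 * (∑ p, ∑ q, (B k i p * B k j q) * Svec t (p, q)) := by
      rw [hpt5, integral_finset_sum _ (fun k _ => integrable_finset_sum _ fun l _ => HIuu k l i j)]
      refine Finset.sum_congr rfl fun k _ => ?_
      rw [integral_finset_sum _ (fun l _ => HIuu k l i j)]
      have hterm : ∀ l : Fin m, ∫ ω, (u t ω k * u t ω l)
            * ((B k).mulVec (x t ω) i * (B l).mulVec (x t ω) j) ∂P
          = (if k = l then σu ^ 2 else 0)
            * ∫ ω, (B k).mulVec (x t ω) i * (B l).mulVec (x t ω) j ∂P := by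
        intro l
        exact huu k l (fun y => (B k).mulVec y i * (B l).mulVec y j)
          (((measurable_pi_apply i).comp (Stmt11.measurable_mulVec_comp (B k) measurable_id)).mul
            ((measurable_pi_apply j).comp (Stmt11.measurable_mulVec_comp (B l) measurable_id)))
      rw [Finset.sum_congr rfl fun l _ => hterm l]
      rw [Finset.sum_eq_single k]
      · rw [if_pos rfl, hXX (B k) (B k) i j]
      · intro l _ hlk
        rw [if_neg (fun h => hlk h.symm), zero_mul]
      · intro h
        exact absurd (Finset.mem_univ k) h
    have hJ6 : ∫ ω, w t ω j * (∑ k, u t ω k • (B k).mulVec (x t ω)) i ∂P = 0 := by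
      rw [hpt6, integral_finset_sum _ (fun k _ => HIwux j k i (B k))]
      refine Finset.sum_eq_zero fun k _ => ?_
      exact hzero_w j (fun z => z.1 k * (B k).mulVec z.2 i)
        (((measurable_pi_apply k).comp measurable_fst).mul
          ((measurable_pi_apply i).comp (Stmt11.measurable_mulVec_comp (B k) measurable_snd)))
    have hJ7 : ∫ ω, w t ω i * A.mulVec (x t ω) j ∂P = 0 :=
      hzero_w i (fun z => A.mulVec z.2 j)
        ((measurable_pi_apply j).comp (Stmt11.measurable_mulVec_comp A measurable_snd))
    have hJ8 : ∫ ω, w t ω i * (∑ k, u t ω k • (B k).mulVec (x t ω)) j ∂P = 0 := by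
      rw [hpt8, integral_finset_sum _ (fun k _ => HIwux i k j (B k))]
      refine Finset.sum_eq_zero fun k _ => ?_
      exact hzero_w i (fun z => z.1 k * (B k).mulVec z.2 j)
        (((measurable_pi_apply k).comp measurable_fst).mul
          ((measurable_pi_apply j).comp (Stmt11.measurable_mulVec_comp (B k) measurable_snd)))
    have hJ9 : ∫ ω, w t ω i * w t ω j ∂P = Sw i j := hwcov t i j
    -- put the pieces together
    have hmain : (∫ ω, x (t+1) ω i * x (t+1) ω j ∂P)
        = ∑ p, ∑ q, (A i p * A j q) * Svec t (p, q)
          + ∑ k, σu ^ 2 * (∑ p, ∑ q, (B k i p * B k j q) * Svec t (p, q))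
          + Sw i j := by
      rw [show (fun ω => x (t+1) ω i * x (t+1) ω j) = _ from hsplit]
      rw [integral_add9 _ _ _ _ _ _ _ _ _ hInt1 hInt2 hInt3 hInt4 hInt5 hInt6 hInt7 hInt8 hInt9]
      rw [hJ1, hJ2, hJ3, hJ4, hJ5, hJ6, hJ7, hJ8, hJ9]
      ring
    rw [hmain]
    -- match against the matrix form
    have hMv : M.mulVec (Svec t) (i, j)
        = ∑ p, ∑ q, (A i p * A j q) * Svec t (p, q)
          + ∑ k, σu ^ 2 * (∑ p, ∑ q, (B k i p * B k j q) * Svec t (p, q)) := by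
      simp only [hMdef, Matrix.mulVec, dotProduct, Matrix.add_apply, Matrix.smul_apply,
        Matrix.kroneckerMap_apply, Finset.sum_apply, Matrix.sum_apply, smul_eq_mul,
        Fintype.sum_prod_type, add_mul]
      rw [show (∑ p : Fin n, ∑ q : Fin n,
            (A i p * A j q * Svec t (p, q)
              + σu ^ 2 * (∑ k, B k i p * B k j q) * Svec t (p, q)))
          = ∑ p : Fin n, ((∑ q : Fin n, A i p * A j q * Svec t (p, q))
              + ∑ q : Fin n, σu ^ 2 * (∑ k, B k i p * B k j q) * Svec t (p, q)) from
        Finset.sum_congr rfl fun p _ => Finset.sum_add_distrib, Finset.sum_add_distrib]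
      congr 1
      have e1 : ∀ p q : Fin n, σu ^ 2 * (∑ k, B k i p * B k j q) * Svec t (p, q)
          = ∑ k, σu ^ 2 * (B k i p * B k j q * Svec t (p, q)) := by
        intro p q
        rw [Finset.mul_sum, Finset.sum_mul]
        exact Finset.sum_congr rfl fun k _ => by ring
      calc ∑ p : Fin n, ∑ q : Fin n, σu ^ 2 * (∑ k, B k i p * B k j q) * Svec t (p, q)
          = ∑ p : Fin n, ∑ q : Fin n, ∑ k, σu ^ 2 * (B k i p * B k j q * Svec t (p, q)) :=
            Finset.sum_congr rfl fun p _ => Finset.sum_congr rfl fun q _ => e1 p q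
        _ = ∑ p : Fin n, ∑ k, ∑ q : Fin n, σu ^ 2 * (B k i p * B k j q * Svec t (p, q)) :=
            Finset.sum_congr rfl fun p _ => Finset.sum_comm
        _ = ∑ k, ∑ p : Fin n, ∑ q : Fin n, σu ^ 2 * (B k i p * B k j q * Svec t (p, q)) :=
            Finset.sum_comm
        _ = ∑ k, σu ^ 2 * ∑ p : Fin n, ∑ q : Fin n, B k i p * B k j q * Svec t (p, q) := by
            refine Finset.sum_congr rfl fun k _ => ?_
            rw [Finset.mul_sum]
            refine Finset.sum_congr rfl fun p _ => ?_
            rw [Finset.mul_sum]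
    show _ = M.mulVec (Svec t) (i, j) + bvec (i, j)
    rw [hMv]
  obtain ⟨c0, hc00, hc0⟩ := Stmt11.sol_bound M hρ Svec bvec hrec
  have hcard : Fintype.card (Fin n × Fin n) = n ^ 2 := by
    simp [Fintype.card_prod, Fintype.card_fin, pow_two]
  refine ⟨(n : ℝ) * c0 * 2 ^ (n ^ 2), n ^ 2, by positivity, le_rfl, fun t => ?_⟩
  have hint : ∀ i : Fin n, Integrable (fun ω => (x t ω i) ^ 2) P := by
    intro i
    have := hIntxx t i i
    simp only [pow_two]
    exact this
  have h1 : ∫ ω, (∑ i, (x t ω i) ^ 2) ∂P = ∑ i, ∫ ω, (x t ω i) ^ 2 ∂P :=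
    integral_finset_sum _ (fun i _ => hint i)
  have h2 : ∀ i : Fin n, ∫ ω, (x t ω i) ^ 2 ∂P = Svec t (i, i) := by
    intro i
    simp only [hSdef, pow_two]
  have hb : ∀ i : Fin n, Svec t (i, i) ≤ c0 * (1 + t : ℝ) ^ (n ^ 2) := by
    intro i
    have h := hc0 t (i, i)
    rw [hcard] at h
    exact (le_abs_self _).trans h
  have hn0 : (0 : ℝ) ≤ (n : ℝ) := Nat.cast_nonneg n
  calc ∫ ω, (∑ i, (x t ω i) ^ 2) ∂P = ∑ i, Svec t (i, i) := by
        rw [h1]; exact Finset.sum_congr rfl fun i _ => h2 i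
    _ ≤ ∑ _i : Fin n, c0 * (1 + t : ℝ) ^ (n ^ 2) := Finset.sum_le_sum fun i _ => hb i
    _ = (n : ℝ) * (c0 * (1 + t : ℝ) ^ (n ^ 2)) := by
        rw [Finset.sum_const, Finset.card_univ, Fintype.card_fin, nsmul_eq_mul]
    _ ≤ (n : ℝ) * (c0 * (2 ^ (n ^ 2) * (1 + (t : ℝ) ^ (n ^ 2)))) :=
        mul_le_mul_of_nonneg_left
          (mul_le_mul_of_nonneg_left (Stmt11.pow_one_add_le (n ^ 2) t) hc00) hn0
    _ = (n : ℝ) * c0 * 2 ^ (n ^ 2) * (1 + (t : ℝ) ^ (n ^ 2)) := by ring
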